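/- For a bay with C+1 >= h+2 columns and h containers per column filled by a uniformly random permutation of {1,...,h(C+1)}, the probability that a fixed column is 'special' (all its containers have labels >= (h-1)(C+1)+1) is (C+1)C(C-1)...(C-h+2) / (h(C+1))(h(C+1)-1)...(h(C+1)-h+1), and this probability is at least (2/(h(h+1)))^h. -/

import Mathlib

section Aux

open Finset Equiv


lemma card_fixing (n : ℕ) (A : Finset (Fin n)) :
    (univ.filter (fun σ : Equiv.Perm (Fin n) => ∀ x ∈ A, σ x = x)).card
      = Nat.factorial (n - A.card) := by
  classical
  rw [← Fintype.card_subtype]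
  have e1 : {σ : Equiv.Perm (Fin n) // ∀ x ∈ A, σ x = x}
      ≃ Equiv.Perm {x : Fin n // ¬ x ∈ A} :=
    (Equiv.subtypeEquivRight (fun σ => by simp)).trans
      (Equiv.Perm.subtypeEquivSubtypePerm (fun x : Fin n => ¬ x ∈ A)).symm
  rw [Fintype.card_congr e1, Fintype.card_perm, Fintype.card_subtype_compl,
    Fintype.card_coe, Fintype.card_fin]

lemma perm_into_card (n : ℕ) (A B : Finset (Fin n)) :
    (univ.filter (fun π : Equiv.Perm (Fin n) => ∀ x ∈ A, π x ∈ B)).card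
      = B.card.descFactorial A.card * Nat.factorial (n - A.card) := by
  classical
  set s := univ.filter (fun π : Equiv.Perm (Fin n) => ∀ x ∈ A, π x ∈ B) with hs
  set t : Finset ({x : Fin n // x ∈ A} → Fin n) :=
    univ.filter (fun g => Function.Injective g ∧ ∀ x, g x ∈ B) with ht
  have hmap : ∀ π ∈ s, (fun x : {x : Fin n // x ∈ A} => π x.1) ∈ t := by
    intro π hπ
    simp only [hs, mem_filter, mem_univ, true_and] at hπ
    simp only [ht, mem_filter, mem_univ, true_and]
    exact ⟨fun a b hab => Subtype.ext (π.injective hab), fun x => hπ x.1 x.2⟩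
  rw [Finset.card_eq_sum_card_fiberwise hmap]
  have hfib : ∀ g ∈ t,
      (s.filter (fun π => (fun x : {x : Fin n // x ∈ A} => π x.1) = g)).card
        = Nat.factorial (n - A.card) := by
    intro g hg
    simp only [ht, mem_filter, mem_univ, true_and] at hg
    obtain ⟨hginj, hgB⟩ := hg
    -- build a permutation π₀ extending g
    let e : {x : Fin n // x ∈ A} ≃ Set.range g := Equiv.ofInjective g hginj
    have hcards : Fintype.card {x : Fin n // ¬ x ∈ A}
        = Fintype.card {x : Fin n // ¬ x ∈ Set.range g} := by
      rw [Fintype.card_subtype_compl, Fintype.card_subtype_compl,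
        Fintype.card_congr e]
    let f := Fintype.equivOfCardEq hcards
    let π₀ : Equiv.Perm (Fin n) := Equiv.subtypeCongr e f
    have hπ₀ : ∀ (x : Fin n) (hx : x ∈ A), π₀ x = g ⟨x, hx⟩ := by
      intro x hx
      simp [π₀, e, Equiv.subtypeCongr, Equiv.sumCompl_symm_apply_of_pos hx]
    have himg : s.filter (fun π => (fun x : {x : Fin n // x ∈ A} => π x.1) = g)
        = Finset.image (fun σ => π₀ * σ)
            (univ.filter (fun σ : Equiv.Perm (Fin n) => ∀ x ∈ A, σ x = x)) := by
      ext π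
      simp only [hs, mem_filter, mem_univ, true_and, Finset.mem_image]
      constructor
      · rintro ⟨-, hres⟩
        refine ⟨π₀⁻¹ * π, ?_, by group⟩
        intro x hx
        have : π x = g ⟨x, hx⟩ := congrFun hres ⟨x, hx⟩
        simp [Equiv.Perm.mul_apply, this, ← hπ₀ x hx]
      · rintro ⟨σ, hσ, rfl⟩
        have key : ∀ (x : Fin n) (hx : x ∈ A), (π₀ * σ) x = g ⟨x, hx⟩ := by
          intro x hx
          simp [Equiv.Perm.mul_apply, hσ x hx, hπ₀ x hx]
        exact ⟨fun x hx => (key x hx) ▸ hgB ⟨x, hx⟩, funext fun x => key x.1 x.2⟩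
    rw [himg, Finset.card_image_of_injective _ (mul_right_injective π₀), card_fixing]
  rw [Finset.sum_congr rfl hfib, Finset.sum_const, smul_eq_mul]
  congr 1
  -- t.card = descFactorial
  rw [← Fintype.card_subtype]
  have e2 : {g : {x : Fin n // x ∈ A} → Fin n // Function.Injective g ∧ ∀ x, g x ∈ B}
      ≃ ({x : Fin n // x ∈ A} ↪ {x : Fin n // x ∈ B}) :=
    { toFun := fun g => ⟨fun x => ⟨g.1 x, g.2.2 x⟩, fun a b hab => g.2.1 (by
        simpa [Subtype.ext_iff] using hab)⟩,
      invFun := fun e => ⟨fun x => (e x).1, fun a b hab => e.injective (Subtype.ext hab),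
        fun x => (e x).2⟩,
      left_inv := fun g => rfl,
      right_inv := fun e => by ext x; rfl }
  rw [Fintype.card_congr e2, Fintype.card_embedding_eq, Fintype.card_coe, Fintype.card_coe]


lemma cardA (h C : ℕ) (hh : 1 ≤ h) (i : Fin (C + 1)) :
    (univ.filter (fun j : Fin (h * (C + 1)) => (j : ℕ) / h = (i : ℕ))).card = h := by
  classical
  trans (univ : Finset (Fin h)).card
  swap
  · simp
  refine Finset.card_nbij' (fun a => (⟨(a : ℕ) % h, Nat.mod_lt _ hh⟩ : Fin h))
      (fun b => (⟨h * (i : ℕ) + (b : ℕ), by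
        have hb : (b : ℕ) < h := b.2
        have hi : (i : ℕ) < C + 1 := i.2
        calc h * (i : ℕ) + (b : ℕ) < h * (i : ℕ) + h := by omega
        _ = h * ((i : ℕ) + 1) := by ring
        _ ≤ h * (C + 1) := Nat.mul_le_mul_left h (by omega)⟩ : Fin (h * (C + 1)))) ?_ ?_ ?_ ?_
  · intro a _; exact Finset.mem_univ _
  · intro b _
    simp only [Finset.mem_coe, Finset.mem_filter, Finset.mem_univ, true_and]
    have hb : (b : ℕ) < h := b.2
    rw [Nat.mul_add_div (by omega), Nat.div_eq_of_lt hb]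
    omega
  · intro a ha
    simp only [Finset.mem_coe, Finset.mem_filter, Finset.mem_univ, true_and] at ha
    apply Fin.ext
    simp only []
    rw [← ha]
    exact Nat.div_add_mod _ h
  · intro b _
    apply Fin.ext
    simp only []
    rw [Nat.mul_add_mod]
    exact Nat.mod_eq_of_lt b.2

lemma cardB (h C : ℕ) (hh : 1 ≤ h) :
    (univ.filter (fun v : Fin (h * (C + 1)) => (h - 1) * (C + 1) ≤ (v : ℕ))).card = C + 1 := by
  classical
  have hsplit : (h - 1) * (C + 1) + (C + 1) = h * (C + 1) := by
    obtain ⟨k, rfl⟩ := Nat.exists_eq_add_of_le hh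
    simp only [Nat.add_sub_cancel_left]
    ring
  trans (univ : Finset (Fin (C + 1))).card
  swap
  · simp
  refine Finset.card_nbij' (fun a => (⟨(a : ℕ) - (h - 1) * (C + 1), by
        have := a.2; omega⟩ : Fin (C + 1)))
      (fun b => (⟨(h - 1) * (C + 1) + (b : ℕ), by have := b.2; omega⟩ : Fin (h * (C + 1)))) ?_ ?_ ?_ ?_
  · intro a _; exact Finset.mem_univ _
  · intro b _
    simp only [Finset.mem_coe, Finset.mem_filter, Finset.mem_univ, true_and]
    omega
  · intro a ha
    simp only [Finset.mem_coe, Finset.mem_filter, Finset.mem_univ, true_and] at ha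
    apply Fin.ext; simp only []; omega
  · intro b _
    apply Fin.ext; simp only []; omega

end Aux

open Classical in
/-- Probability (over a uniformly random permutation of the `h*(C+1)` slots, i.e. a
uniformly random bay with `C+1` columns of `h` containers with labels `π(slot)+1`)
that the fixed column `i` is "special", i.e. all its containers have labels at least
`ω = (h-1)(C+1)+1`. -/
noncomputable def specialProb (h C : ℕ) (i : Fin (C + 1)) : ℚ :=
  ((Finset.univ.filter (fun π : Equiv.Perm (Fin (h * (C + 1))) =>
      ∀ j : Fin (h * (C + 1)), (j : ℕ) / h = (i : ℕ) →
        (h - 1) * (C + 1) + 1 ≤ (π j : ℕ) + 1)).card : ℚ) /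
    (Nat.factorial (h * (C + 1)) : ℚ)

/-- the probability that a fixed column is special equals
`(C+1)·C·…·(C-h+2) / ((h(C+1))·(h(C+1)-1)·…·(h(C+1)-h+1))`, and is at least
`(2/(h(h+1)))^h`, provided `C + 1 ≥ h + 2`. -/
theorem stmt12 (h C : ℕ) (hh : 1 ≤ h) (hC : h + 1 ≤ C) (i : Fin (C + 1)) :
    specialProb h C i
        = (∏ j ∈ Finset.range h, ((C : ℚ) + 1 - (j : ℚ))) /
          (∏ j ∈ Finset.range h, ((h : ℚ) * ((C : ℚ) + 1) - (j : ℚ))) ∧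
      (2 / ((h : ℚ) * ((h : ℚ) + 1))) ^ h ≤ specialProb h C i := by
  classical
  set A : Finset (Fin (h * (C + 1))) :=
    Finset.univ.filter (fun j => (j : ℕ) / h = (i : ℕ)) with hA
  set B : Finset (Fin (h * (C + 1))) :=
    Finset.univ.filter (fun v => (h - 1) * (C + 1) ≤ (v : ℕ)) with hB
  have hAc : A.card = h := cardA h C hh i
  have hBc : B.card = C + 1 := cardB h C hh
  have hhn : h ≤ h * (C + 1) := Nat.le_mul_of_pos_right h (by omega)
  have hfilter : (Finset.univ.filter (fun π : Equiv.Perm (Fin (h * (C + 1))) =>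
      ∀ j : Fin (h * (C + 1)), (j : ℕ) / h = (i : ℕ) →
        (h - 1) * (C + 1) + 1 ≤ (π j : ℕ) + 1)).card
      = (Finset.univ.filter (fun π : Equiv.Perm (Fin (h * (C + 1))) =>
          ∀ x ∈ A, π x ∈ B)).card := by
    congr 1
    ext π
    simp only [Finset.mem_filter, Finset.mem_univ, true_and]
    constructor
    · intro hp x hx
      simp only [hA, Finset.mem_filter, Finset.mem_univ, true_and] at hx
      simp only [hB, Finset.mem_filter, Finset.mem_univ, true_and]
      have := hp x hx
      omega
    · intro hp j hj
      have hmem : j ∈ A := by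
        simp only [hA, Finset.mem_filter, Finset.mem_univ, true_and]; exact hj
      have := hp j hmem
      simp only [hB, Finset.mem_filter, Finset.mem_univ, true_and] at this
      omega
  have hf0 : ((Nat.factorial (h * (C + 1) - h) : ℕ) : ℚ) ≠ 0 := by
    exact_mod_cast Nat.factorial_ne_zero _
  have hP1 : (((C + 1).descFactorial h : ℕ) : ℚ)
      = ∏ j ∈ Finset.range h, ((C : ℚ) + 1 - (j : ℚ)) := by
    rw [Nat.descFactorial_eq_prod_range, Nat.cast_prod]
    refine Finset.prod_congr rfl fun j hj => ?_
    rw [Finset.mem_range] at hj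
    rw [Nat.cast_sub (by omega)]
    push_cast; ring
  have hP2 : (((h * (C + 1)).descFactorial h : ℕ) : ℚ)
      = ∏ j ∈ Finset.range h, ((h : ℚ) * ((C : ℚ) + 1) - (j : ℚ)) := by
    rw [Nat.descFactorial_eq_prod_range, Nat.cast_prod]
    refine Finset.prod_congr rfl fun j hj => ?_
    rw [Finset.mem_range] at hj
    rw [Nat.cast_sub (by omega)]
    push_cast; ring
  have hP2pos : (0:ℚ) < ∏ j ∈ Finset.range h, ((h : ℚ) * ((C : ℚ) + 1) - (j : ℚ)) := by
    apply Finset.prod_pos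
    intro j hj
    rw [Finset.mem_range] at hj
    have h1 : (1:ℚ) ≤ (h : ℚ) := by exact_mod_cast hh
    have h2 : (h : ℚ) + 1 ≤ (C : ℚ) := by exact_mod_cast hC
    have h3 : (j : ℚ) + 1 ≤ (h : ℚ) := by exact_mod_cast hj
    nlinarith
  have hFcast : ((Nat.factorial (h * (C + 1)) : ℕ) : ℚ)
      = ((Nat.factorial (h * (C + 1) - h) : ℕ) : ℚ)
        * ∏ j ∈ Finset.range h, ((h : ℚ) * ((C : ℚ) + 1) - (j : ℚ)) := by
    rw [← Nat.factorial_mul_descFactorial hhn, Nat.cast_mul, hP2]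
  have key : specialProb h C i
      = (∏ j ∈ Finset.range h, ((C : ℚ) + 1 - (j : ℚ))) /
        (∏ j ∈ Finset.range h, ((h : ℚ) * ((C : ℚ) + 1) - (j : ℚ))) := by
    unfold specialProb
    rw [hfilter, perm_into_card, hAc, hBc, hFcast, Nat.cast_mul, hP1]
    rw [mul_comm (((Nat.factorial (h * (C + 1) - h) : ℕ) : ℚ))]
    exact mul_div_mul_right _ _ hf0
  refine ⟨key, ?_⟩
  rw [key, ← Finset.prod_div_distrib]
  have hconst : (2 / ((h : ℚ) * ((h : ℚ) + 1))) ^ h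
      = ∏ _j ∈ Finset.range h, (2 / ((h : ℚ) * ((h : ℚ) + 1))) := by
    rw [Finset.prod_const, Finset.card_range]
  rw [hconst]
  apply Finset.prod_le_prod
  · intro j _
    have h1 : (1:ℚ) ≤ (h : ℚ) := by exact_mod_cast hh
    positivity
  · intro j hj
    rw [Finset.mem_range] at hj
    have h1 : (1:ℚ) ≤ (h : ℚ) := by exact_mod_cast hh
    have h2 : (h : ℚ) + 1 ≤ (C : ℚ) := by exact_mod_cast hC
    have h3 : (j : ℚ) + 1 ≤ (h : ℚ) := by exact_mod_cast hj
    have hj0 : (0:ℚ) ≤ (j : ℚ) := Nat.cast_nonneg j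
    have hden1 : (0:ℚ) < (h : ℚ) * ((h : ℚ) + 1) := by nlinarith
    have hden2 : (0:ℚ) < (h : ℚ) * ((C : ℚ) + 1) - (j : ℚ) := by nlinarith
    rw [div_le_div_iff₀ hden1 hden2]
    nlinarith [mul_nonneg (by linarith : (0:ℚ) ≤ (h:ℚ) - 1 - (j:ℚ))
        (by nlinarith : (0:ℚ) ≤ (h:ℚ) * ((h:ℚ) + 1) - 2),
      mul_nonneg (mul_nonneg (by linarith : (0:ℚ) ≤ (h:ℚ) - 1) (by linarith : (0:ℚ) ≤ (h:ℚ)))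
        (by linarith : (0:ℚ) ≤ (C:ℚ) - (h:ℚ))]
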